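/- For the Thue–Morse substitution, the spectral hull is the segment 𝒦(τ) = { e_{00} + e_{11} + w(e_{01} + e_{10}) : −1 ≤ w ≤ 1 }: a vector v = (1, w, w, 1) (in basis e_{00},e_{01},e_{10},e_{11}) satisfies Cᵗ_τ v = 2v, strong semipositivity (the associated 2×2 matrix [[1,w],[w,1]] is positive semidefinite), and vᵗΣ̂(0) = 1, if and only if w is real with −1 ≤ w ≤ 1. -/

import Mathlib

open Kronecker
open scoped ComplexOrder

/-- For the Thue–Morse substitution, with coincidence matrix `C_τ = R₀⊗R₀ + R₁⊗R₁`
(`R₀ = I₂`, `R₁` the swap matrix) and `Σ̂(0) = ½(1,0,0,1)ᵗ`: a vector `v ∈ ℂ⁴` satisfies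
`Cᵗ_τ v = 2v`, strong semipositivity (the associated `2×2` matrix is positive semidefinite),
and `vᵗΣ̂(0) = 1`, iff `v = e₀₀ + e₁₁ + w(e₀₁ + e₁₀)` for some real `w` with `−1 ≤ w ≤ 1`;
that is, the spectral hull is the segment `𝒦(τ) = {e₀₀ + e₁₁ + w(e₀₁+e₁₀) : −1 ≤ w ≤ 1}`. -/
theorem stmt19 (v : Fin 2 × Fin 2 → ℂ) :
    (((1 : Matrix (Fin 2) (Fin 2) ℂ) ⊗ₖ (1 : Matrix (Fin 2) (Fin 2) ℂ) +
          !![(0 : ℂ), 1; 1, 0] ⊗ₖ !![(0 : ℂ), 1; 1, 0]).transpose.mulVec v = (2 : ℂ) • v ∧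
        (Matrix.of fun a b : Fin 2 => v (a, b)).PosSemidef ∧
        (∑ p : Fin 2 × Fin 2, v p * (if p.1 = p.2 then (1 / 2 : ℂ) else 0)) = 1) ↔
      ∃ w : ℝ, -1 ≤ w ∧ w ≤ 1 ∧
        v = fun p : Fin 2 × Fin 2 => if p.1 = p.2 then 1 else (w : ℂ) := by
  constructor
  · rintro ⟨heig, hpsd, htr⟩
    -- eigen equations
    have h1 := congrFun heig (0, 1)
    have h2 := congrFun heig (0, 0)
    simp [Matrix.mulVec, dotProduct, Fintype.sum_prod_type,
      Fin.sum_univ_two, Matrix.kroneckerMap_apply, Matrix.one_apply,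
      Matrix.transpose_apply] at h1 h2
    -- h1 : v (0,1) + v (1,0) = 2 * v (0,1) ; similar h2
    have hv10 : v (1, 0) = v (0, 1) := by linear_combination h1
    have hv11 : v (1, 1) = v (0, 0) := by linear_combination h2
    -- trace
    simp [Fintype.sum_prod_type, Fin.sum_univ_two] at htr
    have htr' : v (0, 0) * 2⁻¹ + v (1, 1) * 2⁻¹ = 1 := htr
    have hv00 : v (0, 0) = 1 := by
      rw [hv11] at htr'; linear_combination htr'
    have hv00' : v (0 : Fin 2 × Fin 2) = 1 := hv00
    have hv11' : v (1 : Fin 2 × Fin 2) = 1 := hv11.trans hv00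
    -- hermitian gives v(0,1) real
    have hherm := hpsd.1
    have h01 := congrFun (congrFun hherm 0) 1
    simp [Matrix.conjTranspose_apply] at h01
    -- h01 : star (v (1,0)) = v (0,1)
    have hreal : (starRingEnd ℂ) (v (0, 1)) = v (0, 1) := by
      rw [← hv10]; rw [hv10] at h01 ⊢; exact h01
    have him : (v (0, 1)).im = 0 := by
      have := Complex.conj_eq_iff_im.mp hreal; exact this
    refine ⟨(v (0, 1)).re, ?_, ?_, ?_⟩
    · have := hpsd.dotProduct_mulVec_nonneg ![1, 1]
      simp [Matrix.mulVec, dotProduct, Fin.sum_univ_two] at this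
      rw [Complex.nonneg_iff] at this
      have hre := this.1
      simp [Complex.add_re, hv00', hv10, hv11', hv11, hv00] at hre
      linarith
    · have := hpsd.dotProduct_mulVec_nonneg ![1, -1]
      simp [Matrix.mulVec, dotProduct, Fin.sum_univ_two] at this
      rw [Complex.nonneg_iff] at this
      have hre := this.1
      simp [Complex.add_re, Complex.sub_re, hv00', hv10, hv11', hv11, hv00] at hre
      linarith
    · funext p
      obtain ⟨a, b⟩ := p
      fin_cases a <;> fin_cases b <;>
        simp [hv00, hv00', hv10, hv11, hv11', Complex.ext_iff, him]
  · rintro ⟨w, hw1, hw2, rfl⟩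
    refine ⟨?_, Matrix.posSemidef_iff_dotProduct_mulVec.mpr ⟨?_, ?_⟩, ?_⟩
    · funext p
      obtain ⟨a, b⟩ := p
      fin_cases a <;> fin_cases b <;>
        simp [Matrix.mulVec, dotProduct, Fintype.sum_prod_type,
          Fin.sum_univ_two, Matrix.kroneckerMap_apply, Matrix.one_apply,
          Matrix.transpose_apply] <;> ring
    · ext a b
      fin_cases a <;> fin_cases b <;>
        simp [Matrix.conjTranspose_apply]
    · intro x
      have hx : (Matrix.of fun a b : Fin 2 =>
          (fun p : Fin 2 × Fin 2 => if p.1 = p.2 then 1 else (w : ℂ)) (a, b)).mulVec x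
          = ![x 0 + (w:ℂ) * x 1, (w:ℂ) * x 0 + x 1] := by
        funext i
        fin_cases i <;>
          simp [Matrix.mulVec, dotProduct, Fin.sum_univ_two]
      rw [hx]
      rw [Complex.nonneg_iff]
      constructor
      · simp [dotProduct, Fin.sum_univ_two, Complex.add_re, Complex.mul_re,
          Complex.mul_im]
        ring
        nlinarith [sq_nonneg ((x 0).re + (x 1).re), sq_nonneg ((x 0).re - (x 1).re),
          sq_nonneg ((x 0).im + (x 1).im), sq_nonneg ((x 0).im - (x 1).im),
          mul_nonneg (sub_nonneg.mpr hw2) (sq_nonneg ((x 0).re - (x 1).re)),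
          mul_nonneg (sub_nonneg.mpr hw2) (sq_nonneg ((x 0).im - (x 1).im)),
          mul_nonneg (neg_le_iff_add_nonneg.mp hw1) (sq_nonneg ((x 0).re + (x 1).re)),
          mul_nonneg (neg_le_iff_add_nonneg.mp hw1) (sq_nonneg ((x 0).im + (x 1).im))]
      · simp [dotProduct, Fin.sum_univ_two, Complex.add_im, Complex.mul_re,
          Complex.mul_im]
        ring
    · simp [Fintype.sum_prod_type, Fin.sum_univ_two]
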